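/- Let p, q be coprime positive integers with p/q < 1/3. Label a set of q points as x_1, ..., x_{q−2p} (on branch b_1), y_1, ..., y_p (on branch b_2), and z_1, ..., z_p (on branch b_3). Define σ by: σ(x_i) = x_{i+p} for 1 ≤ i ≤ q−3p; σ(x_{q−3p+i}) = y_i for 1 ≤ i ≤ p; σ(y_i) = z_i for 1 ≤ i ≤ p; σ(z_i) = x_i for 1 ≤ i ≤ p. Then σ is a cyclic permutation of all q points (a single q-cycle), and its rotation number (average displacement, where x-to-x steps contribute 0 and each branch-advancing step contributes 1/3) equals p/q. -/

import Mathlib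

/-- The combinatorial model of the unimodal triod-rot-twist of rotation number
`p/q < 1/3`, on points indexed `0, …, q−1`:
indices `0, …, q−2p−1` are the points `x_1, …, x_{q−2p}` on branch `b₁`,
indices `q−2p, …, q−p−1` are `y_1, …, y_p` on branch `b₂`, and
indices `q−p, …, q−1` are `z_1, …, z_p` on branch `b₃`.
`σ(x_i) = x_{i+p}` for `1 ≤ i ≤ q−3p`; `σ(x_{q−3p+i}) = y_i`, `σ(y_i) = z_i`,
`σ(z_i) = x_i` for `1 ≤ i ≤ p`. -/
def sigLow (p q i : ℕ) : ℕ :=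
  if i < q - 3 * p then i + p
  else if i < q - 2 * p then (i - (q - 3 * p)) + (q - 2 * p)
  else if i < q - p then i + p
  else i - (q - p)

/-- Displacement of a step of `sigLow`: `0` for a step staying among the `x`'s,
`1/3` for each branch-advancing step. -/
def dispLow (p q i : ℕ) : ℚ :=
  if i < q - 2 * p ∧ sigLow p q i < q - 2 * p then 0 else 1/3

lemma sig_eq_mod (p q : ℕ) (h3q : 3 * p < q) {i : ℕ} (hi : i < q) :
    sigLow p q i = (i + p) % q := by
  unfold sigLow
  rcases lt_or_ge (i + p) q with h | h
  · rw [Nat.mod_eq_of_lt h]; split_ifs <;> omega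
  · have : (i + p) % q = i + p - q := by
      rw [Nat.mod_eq_sub_mod h, Nat.mod_eq_of_lt (by omega)]
    rw [this]; split_ifs <;> omega

lemma sig_iter (p q : ℕ) (hq : 0 < q) (h3q : 3 * p < q) (n : ℕ) {i : ℕ} (hi : i < q) :
    (sigLow p q)^[n] i = (i + n * p) % q := by
  induction n with
  | zero => simp [Nat.mod_eq_of_lt hi]
  | succ n ih =>
    rw [Function.iterate_succ_apply', ih,
      sig_eq_mod p q h3q (Nat.mod_lt _ hq), Nat.mod_add_mod]
    congr 1; ring

/-- for coprime positive `p, q` with `p/q < 1/3`, the map `σ` above is a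
bijection of `{0, …, q−1}` forming a single `q`-cycle, and its rotation number
(average displacement) equals `p/q`. -/
theorem stmt8 (p q : ℕ) (hp : 0 < p) (hq : 0 < q) (hcop : Nat.Coprime p q)
    (h3 : (p : ℚ) / q < 1/3) :
    Set.BijOn (sigLow p q) {i : ℕ | i < q} {i : ℕ | i < q} ∧
    (∀ i < q, ∀ j < q, ∃ n : ℕ, (sigLow p q)^[n] i = j) ∧
    (∑ i ∈ Finset.range q, dispLow p q i) / q = (p : ℚ) / q := by
  haveI : NeZero q := ⟨hq.ne'⟩
  have h3q : 3 * p < q := by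
    have hq' : (0 : ℚ) < q := by exact_mod_cast hq
    rw [div_lt_div_iff₀ hq' (by norm_num)] at h3
    have : (3 * p : ℚ) < q := by linarith
    exact_mod_cast this
  refine ⟨⟨?_, ?_, ?_⟩, ?_, ?_⟩
  · -- MapsTo
    intro i hi
    simp only [Set.mem_setOf_eq] at hi ⊢
    rw [sig_eq_mod p q h3q hi]
    exact Nat.mod_lt _ hq
  · -- InjOn
    intro i hi j hj h
    simp only [Set.mem_setOf_eq] at hi hj
    rw [sig_eq_mod p q h3q hi, sig_eq_mod p q h3q hj] at h
    have h' : i % q = j % q := Nat.ModEq.add_right_cancel' p h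
    rwa [Nat.mod_eq_of_lt hi, Nat.mod_eq_of_lt hj] at h'
  · -- SurjOn
    intro j hj
    simp only [Set.mem_setOf_eq] at hj
    refine ⟨(j + q - p) % q, Nat.mod_lt _ hq, ?_⟩
    rw [sig_eq_mod p q h3q (Nat.mod_lt _ hq), Nat.mod_add_mod]
    have h1 : j + q - p + p = j + q := by omega
    rw [h1, Nat.add_mod_right, Nat.mod_eq_of_lt hj]
  · -- single cycle
    intro i hi j hj
    have hu : IsUnit (p : ZMod q) := (ZMod.isUnit_iff_coprime p q).mpr hcop
    obtain ⟨u, hu'⟩ := hu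
    set b : ZMod q := ((j : ZMod q) - i) * (↑u⁻¹ : ZMod q) with hb
    refine ⟨b.val, ?_⟩
    rw [sig_iter p q hq h3q b.val hi]
    have key : ((i + b.val * p : ℕ) : ZMod q) = (j : ZMod q) := by
      push_cast
      rw [ZMod.natCast_val, ZMod.cast_id, hb]
      have : (↑u⁻¹ : ZMod q) * p = 1 := by rw [← hu']; exact u.inv_mul
      calc (i : ZMod q) + ((j : ZMod q) - i) * ↑u⁻¹ * p
          = (i : ZMod q) + ((j : ZMod q) - i) * (↑u⁻¹ * p) := by ring
        _ = j := by rw [this]; ring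
    have := congrArg ZMod.val key
    rwa [ZMod.val_natCast, ZMod.val_natCast, Nat.mod_eq_of_lt hj] at this
  · -- rotation number
    have hsum : ∀ i ∈ Finset.range q,
        dispLow p q i = if i < q - 3 * p then (0 : ℚ) else 1/3 := by
      intro i hi
      simp only [Finset.mem_range] at hi
      unfold dispLow
      rw [sig_eq_mod p q h3q hi]
      by_cases h1 : i < q - 2 * p
      · have hm : (i + p) % q = i + p := Nat.mod_eq_of_lt (by omega)
        rw [hm]
        by_cases h2 : i < q - 3 * p
        · rw [if_pos ⟨h1, by omega⟩, if_pos h2]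
        · rw [if_neg (by rintro ⟨-, h⟩; omega), if_neg h2]
      · rw [if_neg (fun h => h1 h.1), if_neg (by omega)]
    rw [Finset.sum_congr rfl hsum]
    have hm : q - 3 * p ≤ q := by omega
    rw [Finset.range_eq_Ico, ← Finset.sum_Ico_consecutive _ (Nat.zero_le (q - 3 * p)) hm]
    have h0 : ∑ i ∈ Finset.Ico 0 (q - 3 * p),
        (if i < q - 3 * p then (0 : ℚ) else 1/3) = 0 := by
      apply Finset.sum_eq_zero
      intro i hi
      simp only [Finset.mem_Ico] at hi
      rw [if_pos hi.2]
    have h1 : ∑ i ∈ Finset.Ico (q - 3 * p) q,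
        (if i < q - 3 * p then (0 : ℚ) else 1/3) = (p : ℚ) := by
      have hc : ∀ i ∈ Finset.Ico (q - 3 * p) q,
          (if i < q - 3 * p then (0 : ℚ) else 1/3) = 1/3 := by
        intro i hi
        simp only [Finset.mem_Ico] at hi
        rw [if_neg (by omega)]
      rw [Finset.sum_congr rfl hc, Finset.sum_const, Nat.card_Ico]
      have : q - (q - 3 * p) = 3 * p := by omega
      rw [this, nsmul_eq_mul]
      push_cast
      ring
    rw [h0, h1, zero_add]
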